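/- Let α > −1, let ω be a weight on the upper half-plane H, and let Φ be a normalized Young function satisfying the Δ₂ condition with constant K. Then there is a constant C > 0, depending only on K, such that for every compactly supported measurable function f and every λ > 0, |{z ∈ H : M^d_{Φ,ω,α} f(z) > λ}|_{ω,α} ≤ C ∫_{{z ∈ H : |f(z)| > λ/2}} Φ(|f(z)|/λ) ω(z) dV_α(z). -/

import Mathlib

open MeasureTheory Set Filter
open scoped ENNReal NNReal

noncomputable section

/-- The upper half-plane `H = {z : 0 < Im z}`. -/
def UHP : Set ℂ := {z : ℂ | 0 < z.im}

/-- The measure `dV_α = y^α dx dy` supported on the upper half-plane. -/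
def Vm (α : ℝ) : Measure ℂ :=
  MeasureTheory.volume.withDensity
    (fun z => if 0 < z.im then ENNReal.ofReal (z.im ^ α) else 0)

/-- The Carleson square `Q_I` attached to the interval `I = (a, b)`. -/
def Qbox (a b : ℝ) : Set ℂ :=
  {z : ℂ | z.re ∈ Set.Ioo a b ∧ z.im ∈ Set.Ioo 0 (b - a)}

/-- The weighted measure `|E|_{ω,α} = ∫_E ω dV_α` of a set `E`. -/
def wvol (α : ℝ) (ω : ℂ → ℝ) (E : Set ℂ) : ℝ≥0∞ :=
  ∫⁻ z in E, ENNReal.ofReal (ω z) ∂(Vm α)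

/-- A weight: a nonnegative locally integrable function on the upper half-plane. -/
def IsWeight (α : ℝ) (ω : ℂ → ℝ) : Prop :=
  Measurable ω ∧ (∀ z, 0 ≤ ω z) ∧ MeasureTheory.LocallyIntegrableOn ω UHP (Vm α)

/-- A normalized Young function: continuous, convex, increasing on `[0,∞)`,
with `Φ 0 = 0`, `Φ 1 = 1` and `Φ t → ∞` as `t → ∞`. -/
structure IsNormalizedYoung (Φ : ℝ → ℝ) : Prop where
  cont : ContinuousOn Φ (Set.Ici 0)
  convex : ConvexOn ℝ (Set.Ici 0) Φ
  mono : MonotoneOn Φ (Set.Ici 0)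
  map_zero : Φ 0 = 0
  map_one : Φ 1 = 1
  tendsto_atTop : Filter.Tendsto Φ Filter.atTop Filter.atTop

/-- The `Δ₂` (doubling) condition with constant `K`. -/
def Delta2 (Φ : ℝ → ℝ) (K : ℝ) : Prop :=
  1 < K ∧ ∀ t : ℝ, 0 ≤ t → Φ (2 * t) ≤ K * Φ t

/-- The class `B_p`: `Δ₂` together with `∫_c^∞ Φ(t)/t^p dt/t < ∞` for some `c > 0`. -/
def InBp (Φ : ℝ → ℝ) (p : ℝ) : Prop :=
  (∃ K : ℝ, Delta2 Φ K) ∧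
    ∃ c : ℝ, 0 < c ∧ (∫⁻ t in Set.Ioi c, ENNReal.ofReal (Φ t / t ^ (p + 1))) < ⊤

/-- The Luxemburg norm `‖f‖_{Q_I, Φ, ω, α}` over the Carleson square of `I = (a,b)`. -/
def luxNorm (α : ℝ) (Φ : ℝ → ℝ) (ω : ℂ → ℝ) (a b : ℝ) (f : ℂ → ℂ) : ℝ≥0∞ :=
  ⨅ (t : ℝ) (_ : 0 < t)
    (_ : (∫⁻ z in Qbox a b, ENNReal.ofReal (Φ (‖f z‖ / t) * ω z) ∂(Vm α)) /
          wvol α ω (Qbox a b) ≤ 1),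
    ENNReal.ofReal t

/-- The maximal function `M_{Φ,ω,α} f`. -/
def maxFn (α : ℝ) (Φ : ℝ → ℝ) (ω : ℂ → ℝ) (f : ℂ → ℂ) (z : ℂ) : ℝ≥0∞ :=
  ⨆ (a : ℝ) (b : ℝ) (_ : z ∈ Qbox a b), luxNorm α Φ ω a b f

/-- The dyadic grid `D^β`, as a set of pairs of endpoints. -/
def dyadicGrid (β : ℝ) : Set (ℝ × ℝ) :=
  {I : ℝ × ℝ | ∃ j m : ℤ, I.1 = (2 : ℝ) ^ j * (m + (-1 : ℝ) ^ j * β) ∧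
    I.2 = (2 : ℝ) ^ j * (m + 1 + (-1 : ℝ) ^ j * β)}

/-- The dyadic maximal function `M^{d,β}_{Φ,ω,α} f`. -/
def dyadicMax (β α : ℝ) (Φ : ℝ → ℝ) (ω : ℂ → ℝ) (f : ℂ → ℂ) (z : ℂ) : ℝ≥0∞ :=
  ⨆ (I : ℝ × ℝ) (_ : I ∈ dyadicGrid β) (_ : z ∈ Qbox I.1 I.2),
    luxNorm α Φ ω I.1 I.2 f

/-- The Hardy–Littlewood maximal function `M_α g` of the upper half-plane. -/
def hlMax (α : ℝ) (g : ℂ → ℝ) (z : ℂ) : ℝ≥0∞ :=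
  ⨆ (a : ℝ) (b : ℝ) (_ : z ∈ Qbox a b),
    (∫⁻ w in Qbox a b, ENNReal.ofReal |g w| ∂(Vm α)) / Vm α (Qbox a b)

/-- The weighted Hardy–Littlewood maximal function `M_{ω,α} f`. -/
def whlMax (α : ℝ) (ω : ℂ → ℝ) (f : ℂ → ℂ) (z : ℂ) : ℝ≥0∞ :=
  ⨆ (a : ℝ) (b : ℝ) (_ : z ∈ Qbox a b),
    (∫⁻ w in Qbox a b, ENNReal.ofReal (‖f w‖ * ω w) ∂(Vm α)) /
      wvol α ω (Qbox a b)

/-- The Békollè–Bonami constant `[ω]_{B_{p,α}}`. -/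
def BBnorm (α p : ℝ) (ω : ℂ → ℝ) : ℝ≥0∞ :=
  ⨆ (a : ℝ) (b : ℝ) (_ : a < b),
    (wvol α ω (Qbox a b) / Vm α (Qbox a b)) *
      ((∫⁻ z in Qbox a b, ENNReal.ofReal (ω z) ^ (1 - p / (p - 1)) ∂(Vm α)) /
          Vm α (Qbox a b)) ^ (p - 1)

/-- Membership in the Békollè–Bonami class `B_{p,α}`. -/
def InBB (α p : ℝ) (ω : ℂ → ℝ) : Prop := BBnorm α p ω < ⊤

/-- Membership in `𝔹_{∞,α} = ⋃_{p>1} B_{p,α}`. -/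
def InBBinfty (α : ℝ) (ω : ℂ → ℝ) : Prop := ∃ p : ℝ, 1 < p ∧ InBB α p ω

/-- The quantity `∫_H |f|^p ω dV_α`. -/
def lpInt (α p : ℝ) (ω : ℂ → ℝ) (f : ℂ → ℂ) : ℝ≥0∞ :=
  ∫⁻ z, ENNReal.ofReal (‖f z‖) ^ p * ENNReal.ofReal (ω z) ∂(Vm α)

/-- The function `K_μ(z) = sup_{I : z ∈ Q_I} μ(Q_I)/|Q_I|_{ω,α}`. -/
def Kmu (α : ℝ) (ω : ℂ → ℝ) (μ : Measure ℂ) (z : ℂ) : ℝ≥0∞ :=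
  ⨆ (a : ℝ) (b : ℝ) (_ : z ∈ Qbox a b), μ (Qbox a b) / wvol α ω (Qbox a b)

/-- `ω` is `α`-doubling with doubling function `φ` and constant `K`. -/
structure AlphaDoubling (α : ℝ) (ω : ℂ → ℝ) (φ : ℝ≥0∞ → ℝ≥0∞) (K : ℝ≥0∞) : Prop where
  mono : Monotone φ
  map_one : φ 1 = 1
  one_le : 1 ≤ K
  bound : ∀ a b : ℝ, ∀ E ⊆ Qbox a b, MeasurableSet E →
    wvol α ω (Qbox a b) / wvol α ω E ≤ K * φ (Vm α (Qbox a b) / Vm α E)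

/-- The complementary (conjugate) Young function `Ψ(s) = sup_{t ≥ 0} (t s − Φ(t))`,
valued in `ℝ≥0∞`. -/
def conjugateYoung (Φ : ℝ → ℝ) (s : ℝ) : ℝ≥0∞ :=
  ⨆ (t : ℝ) (_ : 0 ≤ t), ENNReal.ofReal (t * s - Φ t)

/-- The unweighted Luxemburg norm for an `ℝ≥0∞`-valued Young function. -/
def luxNormE (α : ℝ) (Ψ : ℝ → ℝ≥0∞) (a b : ℝ) (g : ℂ → ℝ) : ℝ≥0∞ :=
  ⨅ (t : ℝ) (_ : 0 < t)
    (_ : (∫⁻ z in Qbox a b, Ψ (|g z| / t) ∂(Vm α)) / Vm α (Qbox a b) ≤ 1),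
    ENNReal.ofReal t

/-- The Békollè–Bonami `B_{∞,α}` constant
`[ω]_{B_{∞,α}} = sup_I |Q_I|_{ω,α}⁻¹ ∫_{Q_I} M_α(ω χ_{Q_I}) dV_α`. -/
def BBinftyNorm (α : ℝ) (ω : ℂ → ℝ) : ℝ≥0∞ :=
  ⨆ (a : ℝ) (b : ℝ) (_ : a < b),
    (∫⁻ z in Qbox a b, hlMax α ((Qbox a b).indicator ω) z ∂(Vm α)) /
      wvol α ω (Qbox a b)

end

/-! ### Auxiliary dyadic geometry -/

noncomputable section

/-- The dyadic Carleson square of scale `2^j` at position `m`. -/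
def Dsq (j m : ℤ) : Set ℂ := Qbox ((2:ℝ)^j * m) ((2:ℝ)^j * (m+1))

end

lemma mem_Dsq {j m : ℤ} {z : ℂ} :
    z ∈ Dsq j m ↔ ((2:ℝ)^j * m < z.re ∧ z.re < (2:ℝ)^j * (m+1)) ∧ 0 < z.im ∧ z.im < (2:ℝ)^j := by
  have h : (2:ℝ)^j * (m+1) - (2:ℝ)^j * m = (2:ℝ)^j := by ring
  simp [Dsq, Qbox, Set.mem_Ioo, h, and_assoc]

lemma measurableSet_Qbox (a b : ℝ) : MeasurableSet (Qbox a b) := by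
  have : Qbox a b = Complex.re ⁻¹' Set.Ioo a b ∩ Complex.im ⁻¹' Set.Ioo 0 (b - a) := rfl
  rw [this]
  exact (measurableSet_Ioo.preimage Complex.measurable_re).inter
    (measurableSet_Ioo.preimage Complex.measurable_im)

lemma witness_mem (j m : ℤ) : (⟨(2:ℝ)^j * (m + 1/2), (2:ℝ)^j * (3/4)⟩ : ℂ) ∈ Dsq j m := by
  have h2 : (0:ℝ) < (2:ℝ)^j := by positivity
  rw [mem_Dsq]
  constructor
  · constructor <;> · simp only; nlinarith
  · constructor <;> nlinarith

lemma pow_le_of_le {j j' : ℤ} (h : j ≤ j') : (2:ℝ)^j ≤ (2:ℝ)^j' :=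
  zpow_le_zpow_right₀ (by norm_num) h

/-- Dichotomy: a smaller-scale dyadic square is contained in or disjoint from a
larger-scale one. -/
lemma dsq_subset_or_disjoint {j m j' m' : ℤ} (h : j ≤ j') :
    Dsq j m ⊆ Dsq j' m' ∨ Dsq j m ∩ Dsq j' m' = ∅ := by
  set n := (j' - j).toNat with hn
  have hjn : j' = j + (n : ℤ) := by
    rw [hn, Int.toNat_of_nonneg (by omega)]; ring
  have h2j : (0:ℝ) < (2:ℝ)^j := by positivity
  have e : (2:ℝ)^j' = (2:ℝ)^j * (2:ℝ)^n := by
    rw [hjn, zpow_add₀ (by norm_num : (2:ℝ) ≠ 0), zpow_natCast]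
  by_cases hc : (2:ℤ)^n * m' ≤ m ∧ m < 2^n * (m' + 1)
  · left
    intro z hz
    rw [mem_Dsq] at hz ⊢
    obtain ⟨⟨h1, h2⟩, h3, h4⟩ := hz
    have c1 : ((2:ℝ)^n * m' : ℝ) ≤ (m:ℝ) := by exact_mod_cast hc.1
    have c2 : ((m:ℝ) + 1) ≤ (2:ℝ)^n * ((m':ℝ) + 1) := by
      have : ((m:ℤ) + 1) ≤ (2:ℤ)^n * (m' + 1) := by omega
      exact_mod_cast this
    refine ⟨⟨?_, ?_⟩, h3, ?_⟩
    · rw [e]; nlinarith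
    · rw [e]; nlinarith
    · exact lt_of_lt_of_le h4 (pow_le_of_le h)
  · right
    ext z
    simp only [Set.mem_inter_iff, Set.mem_empty_iff_false, iff_false, not_and]
    intro hz hz'
    rw [mem_Dsq] at hz hz'
    obtain ⟨⟨h1, h2⟩, h3, h4⟩ := hz
    obtain ⟨⟨h1', h2'⟩, _, _⟩ := hz'
    rw [e] at h1' h2'
    rcases not_and_or.mp hc with hc1 | hc2
    · have : (m:ℝ) + 1 ≤ (2:ℝ)^n * m' := by
        have : ((m:ℤ) + 1) ≤ (2:ℤ)^n * m' := by omega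
        exact_mod_cast this
      nlinarith
    · have : (2:ℝ)^n * ((m':ℝ)+1) ≤ (m:ℝ) := by
        have : ((2:ℤ)^n * (m' + 1) : ℤ) ≤ (m:ℤ) := by omega
        exact_mod_cast this
      nlinarith

/-- Containment of dyadic squares forces scale comparison, with same-scale rigidity. -/
lemma dsq_subset_scale {j m j' m' : ℤ} (hsub : Dsq j m ⊆ Dsq j' m') :
    j ≤ j' ∧ (j = j' → m = m') := by
  have hw := hsub (witness_mem j m)
  rw [mem_Dsq] at hw
  have h2j : (0:ℝ) < (2:ℝ)^j := by positivity
  obtain ⟨⟨hw1, hw2⟩, hw3, hw4⟩ := hw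
  simp only at hw1 hw2 hw4
  constructor
  · by_contra hlt
    push_neg at hlt
    have h1 : (2:ℝ)^j' ≤ (2:ℝ)^(j-1) := pow_le_of_le (by omega)
    have e : (2:ℝ)^(j-1) = (2:ℝ)^j / 2 := by
      rw [zpow_sub₀ (by norm_num : (2:ℝ) ≠ 0)]; norm_num
    nlinarith
  · intro hjj
    subst hjj
    have c1 : (m':ℝ) < (m:ℝ) + 1/2 := by nlinarith
    have c2 : (m:ℝ) + 1/2 < (m':ℝ) + 1 := by nlinarith
    have d1 : (m':ℤ) < m + 1 := by exact_mod_cast (by linarith : (m':ℝ) < m + 1)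
    have d2 : (m:ℤ) < m' + 1 := by exact_mod_cast (by linarith : (m:ℝ) < m' + 1)
    omega

/-- Every bad square of scale at most `N` is contained in a maximal one. -/
lemma exists_maximal (bad : ℤ → ℤ → Prop) (N : ℤ) :
    ∀ n : ℕ, ∀ j m : ℤ, (N - j).toNat ≤ n → bad j m → j ≤ N →
    ∃ j₀ m₀, bad j₀ m₀ ∧ j₀ ≤ N ∧ Dsq j m ⊆ Dsq j₀ m₀ ∧
      ∀ j₁ m₁, bad j₁ m₁ → j₁ ≤ N → Dsq j₀ m₀ ⊆ Dsq j₁ m₁ → j₀ = j₁ ∧ m₀ = m₁ := by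
  intro n
  induction n using Nat.strong_induction_on with
  | _ n ih =>
    intro j m hn hb hjN
    by_cases hmax : ∀ j₁ m₁, bad j₁ m₁ → j₁ ≤ N → Dsq j m ⊆ Dsq j₁ m₁ → j = j₁ ∧ m = m₁
    · exact ⟨j, m, hb, hjN, subset_rfl, hmax⟩
    · push_neg at hmax
      obtain ⟨j₁, m₁, hb₁, hN₁, hsub, hne⟩ := hmax
      have hsc := dsq_subset_scale hsub
      have hjj : j < j₁ := by
        rcases lt_or_eq_of_le hsc.1 with h | h
        · exact h
        · exact absurd (hsc.2 h) (hne h)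
      have hlt : (N - j₁).toNat < n := by omega
      obtain ⟨j₀, m₀, h1, h2, h3, h4⟩ := ih _ hlt j₁ m₁ le_rfl hb₁ hN₁
      exact ⟨j₀, m₀, h1, h2, hsub.trans h3, h4⟩

/-- Lemma 2.1, weak-type part: for `Φ` satisfying `Δ₂` with
constant `K`, there is `C > 0` depending only on `K` with
`|{M^d_{Φ,ω,α} f > λ}|_{ω,α} ≤ C ∫_{|f| > λ/2} Φ(|f|/λ) ω dV_α`. -/
theorem statement7 (K : ℝ) (hK : 1 < K) :
    ∃ C : ℝ, 0 < C ∧ ∀ α : ℝ, -1 < α → ∀ ω : ℂ → ℝ, IsWeight α ω →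
      ∀ Φ : ℝ → ℝ, IsNormalizedYoung Φ → Delta2 Φ K →
      ∀ f : ℂ → ℂ, Measurable f → HasCompactSupport f →
      ∀ lam : ℝ, 0 < lam →
      wvol α ω {z : ℂ | ENNReal.ofReal lam < dyadicMax 0 α Φ ω f z}
        ≤ ENNReal.ofReal C *
            ∫⁻ z in {z : ℂ | lam / 2 < ‖f z‖},
              ENNReal.ofReal (Φ (‖f z‖ / lam) * ω z) ∂(Vm α) := by
  refine ⟨2, by norm_num, ?_⟩
  intro α hα ω hω Φ hΦ hΔ f hf hfc lam hlam
  obtain ⟨hωm, hωnn, -⟩ := hω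
  -- basic facts about Φ
  have hΦhalf : Φ (1/2) ≤ 1/2 := by
    have h := hΦ.convex.2 (Set.self_mem_Ici) (by norm_num : (1:ℝ) ∈ Set.Ici 0)
      (by norm_num : (0:ℝ) ≤ 1/2) (by norm_num : (0:ℝ) ≤ 1/2) (by norm_num)
    simp only [smul_eq_mul, hΦ.map_zero, hΦ.map_one] at h
    calc Φ (1/2) = Φ (1/2 * 0 + 1/2 * 1) := by norm_num
    _ ≤ 1/2 * 0 + 1/2 * 1 := h
    _ = 1/2 := by norm_num
  -- measurability
  have habs : Measurable fun z => ‖f z‖ := by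
    simpa using hf.norm
  have hg0 : Measurable fun z => Φ (‖f z‖ / lam) := by
    have hres : Continuous ((Set.Ici (0:ℝ)).restrict Φ) :=
      continuousOn_iff_continuous_restrict.mp hΦ.cont
    have hm : Measurable fun z => (⟨‖f z‖ / lam, by
        simp only [Set.mem_Ici]; positivity⟩ : Set.Ici (0:ℝ)) :=
      (habs.div_const lam).subtype_mk
    exact hres.measurable.comp hm
  set g : ℂ → ℝ≥0∞ := fun z => ENNReal.ofReal (Φ (‖f z‖ / lam) * ω z) with hgdef
  set w : ℂ → ℝ≥0∞ := fun z => ENNReal.ofReal (ω z) with hwdef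
  have hgm : Measurable g := (hg0.mul hωm).ennreal_ofReal
  have hwm : Measurable w := hωm.ennreal_ofReal
  have hSF : SFinite (Vm α) := by unfold Vm; infer_instance
  set ν : Measure ℂ := (Vm α).withDensity w with hνdef
  set μ' : Measure ℂ := (Vm α).withDensity g with hμdef
  have hν : ∀ s : Set ℂ, ν s = ∫⁻ z in s, w z ∂(Vm α) := fun s => withDensity_apply' w s
  have hμ' : ∀ s : Set ℂ, μ' s = ∫⁻ z in s, g z ∂(Vm α) := fun s => withDensity_apply' g s
  set E : Set ℂ := {z : ℂ | lam / 2 < ‖f z‖} with hEdef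
  have hEm : MeasurableSet E := measurableSet_lt measurable_const habs
  -- the "bad square" predicate
  set bad : ℤ → ℤ → Prop := fun j m =>
    ¬ ((∫⁻ z in Dsq j m, ENNReal.ofReal (Φ (‖f z‖ / lam) * ω z) ∂(Vm α)) /
        wvol α ω (Dsq j m) ≤ 1) with hbaddef
  -- per-square estimate
  have key : ∀ j m : ℤ, bad j m → ν (Dsq j m) ≤ 2 * μ' (Dsq j m ∩ E) := by
    intro j m hb
    set D := Dsq j m with hD
    have hb' : 1 < μ' D / ν D := by
      rw [hμ', hν]
      have h1 : (∫⁻ z in D, w z ∂(Vm α)) = wvol α ω D := rfl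
      rw [h1]
      exact not_le.mp hb
    rcases eq_or_ne (ν D) ⊤ with htop | hnt
    · rw [htop, ENNReal.div_top] at hb'; exact absurd hb' (by norm_num)
    rcases eq_or_ne (ν D) 0 with h0 | hn0
    · rw [h0]; exact zero_le
    have hblt : ν D < μ' D := by
      have := (ENNReal.lt_div_iff_mul_lt (Or.inl hn0) (Or.inl hnt)).mp hb'
      simpa using this
    have hsplit : μ' D = μ' (D ∩ E) + μ' (D \ E) := (measure_inter_add_diff D hEm).symm
    have hsmall : μ' (D \ E) ≤ 2⁻¹ * ν (D \ E) := by
      rw [hμ', hν]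
      have hpt : ∀ z ∈ D \ E, g z ≤ 2⁻¹ * w z := by
        intro z hz
        have hzE : ¬ (lam / 2 < ‖f z‖) := hz.2
        push_neg at hzE
        have hq : ‖f z‖ / lam ≤ 1/2 := by
          rw [div_le_iff₀ hlam]; linarith [hzE]
        have hΦle : Φ (‖f z‖ / lam) ≤ 1/2 := by
          refine le_trans ?_ hΦhalf
          exact hΦ.mono (by simp only [Set.mem_Ici]; positivity)
            (by norm_num : (1/2:ℝ) ∈ Set.Ici 0) hq
        have : Φ (‖f z‖ / lam) * ω z ≤ 2⁻¹ * ω z := by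
          have := hωnn z; nlinarith
        calc g z ≤ ENNReal.ofReal (2⁻¹ * ω z) := ENNReal.ofReal_le_ofReal this
        _ = 2⁻¹ * w z := by
            rw [ENNReal.ofReal_mul (by norm_num),
              ENNReal.ofReal_inv_of_pos (by norm_num : (0:ℝ) < 2)]
            norm_num
            rfl
      calc (∫⁻ z in D \ E, g z ∂(Vm α)) ≤ ∫⁻ z in D \ E, 2⁻¹ * w z ∂(Vm α) := by
            refine setLIntegral_mono (by fun_prop) hpt
      _ = 2⁻¹ * ∫⁻ z in D \ E, w z ∂(Vm α) := lintegral_const_mul 2⁻¹ hwm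
    have hmain : ν D < μ' (D ∩ E) + 2⁻¹ * ν D := by
      calc ν D < μ' D := hblt
      _ = μ' (D ∩ E) + μ' (D \ E) := hsplit
      _ ≤ μ' (D ∩ E) + 2⁻¹ * ν (D \ E) := add_le_add le_rfl hsmall
      _ ≤ μ' (D ∩ E) + 2⁻¹ * ν D :=
          add_le_add le_rfl (mul_le_mul_right (measure_mono Set.diff_subset) 2⁻¹)
    have hhalf : 2⁻¹ * ν D = ν D / 2 := by rw [ENNReal.div_eq_inv_mul]
    rw [hhalf] at hmain
    have h2 : ν D / 2 + ν D / 2 < μ' (D ∩ E) + ν D / 2 := by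
      rw [ENNReal.add_halves]; exact hmain
    have h3 : ν D / 2 < μ' (D ∩ E) :=
      (ENNReal.add_lt_add_iff_right (ENNReal.div_lt_top hnt (by norm_num)).ne).mp h2
    calc ν D = ν D / 2 * 2 := (ENNReal.div_mul_cancel (by norm_num) (by norm_num)).symm
    _ ≤ μ' (D ∩ E) * 2 := mul_le_mul_left h3.le 2
    _ = 2 * μ' (D ∩ E) := mul_comm _ _
  -- covering of the superlevel set by bad squares of bounded scale
  set S : ℕ → Set ℂ := fun N => ⋃ (p : ℤ × ℤ) (_ : bad p.1 p.2 ∧ p.1 ≤ (N:ℤ)), Dsq p.1 p.2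
    with hSdef
  have hScover : {z : ℂ | ENNReal.ofReal lam < dyadicMax 0 α Φ ω f z} ⊆ ⋃ N, S N := by
    intro z hz
    simp only [Set.mem_setOf_eq, dyadicMax, lt_iSup_iff] at hz
    obtain ⟨I, hI, hzQ, hlt⟩ := hz
    obtain ⟨j, m, hI1, hI2⟩ := hI
    have hI1' : I.1 = (2:ℝ)^j * m := by rw [hI1]; ring
    have hI2' : I.2 = (2:ℝ)^j * (m+1) := by rw [hI2]; ring
    rw [hI1', hI2'] at hzQ hlt
    have hbad : bad j m := by
      intro hcond
      have hle : luxNorm α Φ ω ((2:ℝ)^j * m) ((2:ℝ)^j * (m+1)) f ≤ ENNReal.ofReal lam := by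
        refine iInf_le_of_le lam ?_
        refine iInf_le_of_le hlam ?_
        exact iInf_le _ hcond
      exact absurd hlt (not_lt.mpr hle)
    refine Set.mem_iUnion.mpr ⟨j.toNat, ?_⟩
    refine Set.mem_iUnion.mpr ⟨(j, m), ?_⟩
    exact Set.mem_iUnion.mpr ⟨⟨hbad, Int.self_le_toNat j⟩, hzQ⟩
  -- scale-N estimate via maximal squares
  have stepC : ∀ N : ℕ, ν (S N) ≤ 2 * μ' E := by
    intro N
    set maxP : ℤ × ℤ → Prop := fun p => bad p.1 p.2 ∧ p.1 ≤ (N:ℤ) ∧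
      ∀ j₁ m₁, bad j₁ m₁ → j₁ ≤ (N:ℤ) → Dsq p.1 p.2 ⊆ Dsq j₁ m₁ → p.1 = j₁ ∧ p.2 = m₁
      with hmaxPdef
    set T : Set (ℤ × ℤ) := {p | maxP p} with hTdef
    have hcov : S N ⊆ ⋃ p ∈ T, Dsq p.1 p.2 := by
      intro z hz
      simp only [hSdef, Set.mem_iUnion] at hz
      obtain ⟨p, ⟨hb, hle⟩, hzp⟩ := hz
      obtain ⟨j₀, m₀, hb₀, hle₀, hsub, hmax⟩ :=
        exists_maximal bad (N:ℤ) ((N:ℤ) - p.1).toNat p.1 p.2 le_rfl hb hle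
      exact Set.mem_biUnion (show ((j₀, m₀) : ℤ × ℤ) ∈ T from ⟨hb₀, hle₀, hmax⟩) (hsub hzp)
    have hdisj : T.PairwiseDisjoint (fun p : ℤ × ℤ => Dsq p.1 p.2) := by
      have H : ∀ p q : ℤ × ℤ, maxP p → maxP q → p ≠ q → p.1 ≤ q.1 →
          Disjoint (Dsq p.1 p.2) (Dsq q.1 q.2) := by
        intro p q hp hq hpq hle
        rcases dsq_subset_or_disjoint hle with hsub | hint
        · exfalso
          have := hp.2.2 q.1 q.2 hq.1 hq.2.1 hsub
          exact hpq (Prod.ext this.1 this.2)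
        · exact Set.disjoint_iff_inter_eq_empty.mpr hint
      intro p hp q hq hpq
      rcases le_total p.1 q.1 with h | h
      · exact H p q hp hq hpq h
      · exact (H q p hq hp (Ne.symm hpq) h).symm
    have hdisj' : T.PairwiseDisjoint (fun p : ℤ × ℤ => Dsq p.1 p.2 ∩ E) := by
      intro p hp q hq hpq
      exact Set.disjoint_of_subset Set.inter_subset_left Set.inter_subset_left
        (hdisj hp hq hpq)
    calc ν (S N) ≤ ν (⋃ p ∈ T, Dsq p.1 p.2) := measure_mono hcov
    _ ≤ ∑' p : T, ν (Dsq (p:ℤ×ℤ).1 (p:ℤ×ℤ).2) := measure_biUnion_le ν T.to_countable _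
    _ ≤ ∑' p : T, 2 * μ' (Dsq (p:ℤ×ℤ).1 (p:ℤ×ℤ).2 ∩ E) :=
        ENNReal.tsum_le_tsum (fun p => key (p:ℤ×ℤ).1 (p:ℤ×ℤ).2 p.2.1)
    _ = 2 * ∑' p : T, μ' (Dsq (p:ℤ×ℤ).1 (p:ℤ×ℤ).2 ∩ E) := ENNReal.tsum_mul_left
    _ = 2 * μ' (⋃ p ∈ T, (Dsq p.1 p.2 ∩ E)) := by
        rw [measure_biUnion T.to_countable hdisj'
          (fun p _ => (measurableSet_Qbox _ _).inter hEm)]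
    _ ≤ 2 * μ' E := by
        gcongr
        exact Set.iUnion₂_subset fun p _ => Set.inter_subset_right
  -- assemble
  have hmono : Monotone S := by
    intro N N' hNN z hz
    simp only [hSdef, Set.mem_iUnion] at hz ⊢
    obtain ⟨p, ⟨hb, hle⟩, hzp⟩ := hz
    exact ⟨p, ⟨hb, le_trans hle (by exact_mod_cast hNN)⟩, hzp⟩
  calc wvol α ω {z : ℂ | ENNReal.ofReal lam < dyadicMax 0 α Φ ω f z}
      = ∫⁻ z in {z : ℂ | ENNReal.ofReal lam < dyadicMax 0 α Φ ω f z}, w z ∂(Vm α) := rfl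
  _ ≤ ∫⁻ z in ⋃ N, S N, w z ∂(Vm α) := lintegral_mono_set hScover
  _ = ν (⋃ N, S N) := (hν _).symm
  _ = ⨆ N, ν (S N) := hmono.directed_le.measure_iUnion
  _ ≤ 2 * μ' E := iSup_le stepC
  _ = ENNReal.ofReal 2 *
        ∫⁻ z in {z : ℂ | lam / 2 < ‖f z‖},
          ENNReal.ofReal (Φ (‖f z‖ / lam) * ω z) ∂(Vm α) := by
      rw [hμ']
      norm_num
      rfl
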